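/- Let E be a low-defect expression and T = T(E) its associated low-defect tree. For any two variables x and y of E, one has x ⪯ y in the nesting ordering of E if and only if the non-root vertex of T corresponding to x is a descendant of the non-root vertex of T corresponding to y. -/

import Mathlib

/-- `CpxW n k` : the positive integer `n` can be written using exactly `k` ones,
with an arbitrary combination of additions and multiplications. -/
inductive CpxW : ℕ → ℕ → Prop
  | one : CpxW 1 1
  | add {a b m n : ℕ} : CpxW a m → CpxW b n → CpxW (a + b) (m + n)
  | mul {a b m n : ℕ} : CpxW a m → CpxW b n → CpxW (a * b) (m + n)

/-- The integer complexity `‖n‖`. -/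
noncomputable def cpx (n : ℕ) : ℕ := sInf {k | CpxW n k}

/-- Low-defect expressions: built from positive integer constants (rule `const`,
positivity recorded in `LDE.WF`), products (rule `mul`, disjointness of the
variables recorded in `LDE.WF`) and `E·x + c` (rule `step`, freshness of `x`
recorded in `LDE.WF`).  Variables are indexed by natural numbers. -/
inductive LDE : Type
  | const (n : ℕ) : LDE
  | mul (E₁ E₂ : LDE) : LDE
  | step (E : LDE) (x : ℕ) (c : ℕ) : LDE

/-- The set of variables used by a low-defect expression. -/
def LDE.vars : LDE → Finset ℕ
  | .const _ => ∅
  | .mul E₁ E₂ => E₁.vars ∪ E₂.vars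
  | .step E x _ => insert x E.vars

/-- Well-formedness of a low-defect expression: constants are positive, the two
factors of a product use disjoint sets of variables, and the variable of
`E·x + c` does not occur in `E`. -/
def LDE.WF : LDE → Prop
  | .const n => 0 < n
  | .mul E₁ E₂ => E₁.WF ∧ E₂.WF ∧ Disjoint E₁.vars E₂.vars
  | .step E x c => E.WF ∧ x ∉ E.vars ∧ 0 < c

/-- The polynomial obtained by evaluating a low-defect expression. -/
noncomputable def LDE.poly : LDE → MvPolynomial ℕ ℤ
  | .const n => MvPolynomial.C (n : ℤ)
  | .mul E₁ E₂ => E₁.poly * E₂.poly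
  | .step E x c => E.poly * MvPolynomial.X x + MvPolynomial.C (c : ℤ)

/-- The complexity `‖E‖` of a low-defect expression. -/
noncomputable def LDE.cpx : LDE → ℕ
  | .const n => _root_.cpx n
  | .mul E₁ E₂ => E₁.cpx + E₂.cpx
  | .step E _ c => E.cpx + _root_.cpx c

/-- Low-defect trees: rooted trees whose vertices and edges are labeled by
natural numbers (positivity of the labels is recorded in `LDT.Pos`); a node
carries its label together with the list of its subtrees, each with the label of
the corresponding edge. -/
inductive LDT : Type
  | node (label : ℕ) (children : List (ℕ × LDT)) : LDT

/-- The label of the root. -/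
def LDT.label : LDT → ℕ | .node n _ => n

/-- The children (edge label, subtree) of the root. -/
def LDT.children : LDT → List (ℕ × LDT) | .node _ cs => cs

mutual
/-- All labels of a low-defect tree are positive. -/
def LDT.Pos : LDT → Prop
  | .node n cs => 0 < n ∧ LDT.PosAux cs

def LDT.PosAux : List (ℕ × LDT) → Prop
  | [] => True
  | c :: cs => 0 < c.1 ∧ c.2.Pos ∧ LDT.PosAux cs
end

/-- Isomorphism of labeled rooted trees: a root-preserving, label-preserving
graph isomorphism; concretely, the root labels agree and the children lists
match up to a permutation, recursively. -/
inductive LDT.Iso : LDT → LDT → Prop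
  | node (n : ℕ) (cs₁ cs₂ : List (ℕ × LDT)) (σ : Fin cs₁.length ≃ Fin cs₂.length)
      (hlab : ∀ i : Fin cs₁.length, (cs₁.get i).1 = (cs₂.get (σ i)).1)
      (hiso : ∀ i : Fin cs₁.length, LDT.Iso (cs₁.get i).2 (cs₂.get (σ i)).2) :
      LDT.Iso (.node n cs₁) (.node n cs₂)

/-- The low-defect tree `T(E)` associated to a low-defect expression `E`. -/
def LDE.tree : LDE → LDT
  | .const n => .node n []
  | .step E _ c => .node 1 [(c, E.tree)]
  | .mul E₁ E₂ => .node (E₁.tree.label * E₂.tree.label) (E₁.tree.children ++ E₂.tree.children)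

/-- The subtree of a low-defect tree at a position (a path from the root, given
by the list of child indices); `none` if there is no such vertex. -/
def LDT.sub? : LDT → List ℕ → Option LDT
  | t, [] => some t
  | t, i :: p =>
    match t.children[i]? with
    | some c => LDT.sub? c.2 p
    | none => none

/-- `p` is a vertex of `t` (vertices are encoded by their positions). -/
def LDT.IsVert (t : LDT) (p : List ℕ) : Prop := (t.sub? p).isSome

/-- The label of the vertex at position `p` (junk value `1` if `p` is not a
vertex). -/
def LDT.labelAt (t : LDT) (p : List ℕ) : ℕ := ((t.sub? p).map LDT.label).getD 1

/-- The list of children at position `p`. -/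
def LDT.childrenAt (t : LDT) (p : List ℕ) : List (ℕ × LDT) :=
  ((t.sub? p).map LDT.children).getD []

/-- The label of the edge joining the non-root vertex at position `q` to its
parent (junk value `1` if there is no such edge). -/
def LDT.edgeLabelAt (t : LDT) (q : List ℕ) : ℕ :=
  (((t.sub? q.dropLast).bind (fun s => s.children[q.getLast?.getD 0]?)).map
    Prod.fst).getD 1

mutual
/-- The list of all positions (vertices) of a low-defect tree. -/
def LDT.positions : LDT → List (List ℕ)
  | .node _ cs => [] :: LDT.positionsAux 0 cs

def LDT.positionsAux : ℕ → List (ℕ × LDT) → List (List ℕ)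
  | _, [] => []
  | i, c :: cs => (c.2.positions.map (i :: ·)) ++ LDT.positionsAux (i + 1) cs
end

/-- The finite set of vertices (positions) of a low-defect tree. -/
def LDT.vertFinset (t : LDT) : Finset (List ℕ) := t.positions.toFinset

/-- The finite set of edges of a low-defect tree, an edge being encoded by the
position of its lower (non-root) endpoint. -/
def LDT.edgeFinset (t : LDT) : Finset (List ℕ) := t.positions.toFinset.erase []

/-- The variable of `E` corresponding to the non-root vertex of `T(E)` at a given
position, under the canonical bijection between variables of `E` and non-root
vertices of `T(E)`. -/
def LDE.varAt : LDE → List ℕ → Option ℕ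
  | .const _, _ => none
  | .step E x _, p =>
    match p with
    | 0 :: p' => if p' = [] then some x else E.varAt p'
    | _ => none
  | .mul E₁ E₂, p =>
    match p with
    | i :: p' =>
      if i < E₁.tree.children.length then E₁.varAt (i :: p')
      else E₂.varAt ((i - E₁.tree.children.length) :: p')
    | [] => none

/-- The position of the non-root vertex of `T(E)` corresponding to a variable of
`E`, under the canonical bijection. -/
def LDE.posOf : LDE → ℕ → Option (List ℕ)
  | .const _, _ => none
  | .step E v _, x => if x = v then some [0] else (E.posOf x).map (0 :: ·)
  | .mul E₁ E₂, x =>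
    match E₁.posOf x with
    | some p => some p
    | none => (E₂.posOf x).map (fun p =>
        match p with
        | i :: p' => (i + E₁.tree.children.length) :: p'
        | [] => [])

/-- The nesting ordering on the variables of a low-defect expression:
`x ⪯ y` iff `x` appears in the smallest low-defect subexpression of `E`
containing `y` (which is the subexpression `E'·y + c` where `y` is introduced). -/
def LDE.nestLe : LDE → ℕ → ℕ → Prop
  | .const _, _, _ => False
  | .step E v _, x, y => if y = v then (x = y ∨ x ∈ E.vars) else E.nestLe x y
  | .mul E₁ E₂, x, y => E₁.nestLe x y ∨ E₂.nestLe x y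

lemma LDE.posOf_isSome (E : LDE) (x : ℕ) : (E.posOf x).isSome ↔ x ∈ E.vars := by
  induction E with
  | const n => simp [LDE.posOf, LDE.vars]
  | mul E₁ E₂ ih₁ ih₂ =>
    simp only [LDE.vars, Finset.mem_union, ← ih₁, ← ih₂]
    cases h : E₁.posOf x with
    | some p => simp [LDE.posOf, h]
    | none => cases h2 : E₂.posOf x <;> simp [LDE.posOf, h, h2]
  | step E v c ih =>
    simp only [LDE.vars, Finset.mem_insert, ← ih]
    by_cases hx : x = v
    · simp [LDE.posOf, hx]
    · cases h : E.posOf x <;> simp [LDE.posOf, hx, h]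

lemma LDE.posOf_eq_some (E : LDE) {x : ℕ} (hx : x ∈ E.vars) :
    ∃ p, E.posOf x = some p := by
  have := (E.posOf_isSome x).2 hx
  exact ⟨(E.posOf x).get this, (Option.some_get this).symm⟩

lemma LDE.posOf_eq_none (E : LDE) {x : ℕ} (hx : x ∉ E.vars) :
    E.posOf x = none := by
  rw [← Option.not_isSome_iff_eq_none, E.posOf_isSome x]; exact hx

lemma LDE.tree_mul_children (E₁ E₂ : LDE) :
    (LDE.mul E₁ E₂).tree.children = E₁.tree.children ++ E₂.tree.children := rfl

lemma LDE.tree_step_children (E : LDE) (v c : ℕ) :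
    (LDE.step E v c).tree.children = [(c, E.tree)] := rfl

lemma LDE.posOf_cons (E : LDE) {x : ℕ} {p : List ℕ} (h : E.posOf x = some p) :
    ∃ i p', p = i :: p' ∧ i < E.tree.children.length := by
  induction E generalizing p with
  | const n => simp [LDE.posOf] at h
  | mul E₁ E₂ ih₁ ih₂ =>
    simp only [LDE.posOf] at h
    cases h1 : E₁.posOf x with
    | some q =>
      rw [h1] at h
      obtain ⟨i, p', rfl, hi⟩ := ih₁ h1
      refine ⟨i, p', by simpa using h.symm, ?_⟩
      rw [LDE.tree_mul_children, List.length_append]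
      omega
    | none =>
      rw [h1] at h
      cases h2 : E₂.posOf x with
      | some q =>
        rw [h2] at h
        obtain ⟨i, p', rfl, hi⟩ := ih₂ h2
        refine ⟨i + E₁.tree.children.length, p', by simpa using h.symm, ?_⟩
        rw [LDE.tree_mul_children, List.length_append]
        omega
      | none => rw [h2] at h; simp at h
  | step E v c ih =>
    simp only [LDE.posOf] at h
    by_cases hx : x = v
    · rw [if_pos hx, Option.some_inj] at h
      exact ⟨0, [], h.symm, by rw [LDE.tree_step_children]; simp⟩
    · simp only [if_neg hx] at h
      cases h1 : E.posOf x with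
      | some q =>
        rw [h1] at h
        exact ⟨0, q, by simpa using h.symm, by rw [LDE.tree_step_children]; simp⟩
      | none => rw [h1] at h; simp at h

lemma LDE.nestLe_mem (E : LDE) {x y : ℕ} (h : E.nestLe x y) :
    x ∈ E.vars ∧ y ∈ E.vars := by
  induction E with
  | const n => simp [LDE.nestLe] at h
  | mul E₁ E₂ ih₁ ih₂ =>
    simp only [LDE.vars, Finset.mem_union]
    rcases h with h | h
    · exact ⟨Or.inl (ih₁ h).1, Or.inl (ih₁ h).2⟩
    · exact ⟨Or.inr (ih₂ h).1, Or.inr (ih₂ h).2⟩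
  | step E v c ih =>
    simp only [LDE.vars, Finset.mem_insert]
    simp only [LDE.nestLe] at h
    by_cases hy : y = v
    · rw [if_pos hy] at h
      rcases h with rfl | h
      · exact ⟨Or.inl hy, Or.inl hy⟩
      · exact ⟨Or.inr h, Or.inl hy⟩
    · rw [if_neg hy] at h
      exact ⟨Or.inr (ih h).1, Or.inr (ih h).2⟩

/-- `x ⪯ y` in the nesting ordering of `E` iff the vertex of
`T(E)` corresponding to `x` is a descendant of the vertex corresponding to `y`
(positions being paths from the root, `u` is a descendant of `v` iff `v` is a
prefix of `u`). -/
theorem nesting_iff_descendant (E : LDE) (hE : E.WF) (x y : ℕ)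
    (hx : x ∈ E.vars) (hy : y ∈ E.vars) :
    E.nestLe x y ↔
      ∃ px py : List ℕ, E.posOf x = some px ∧ E.posOf y = some py ∧ py <+: px := by
  induction E with
  | const n => simp [LDE.vars] at hx
  | mul E₁ E₂ ih₁ ih₂ =>
    obtain ⟨h1, h2, hd⟩ := hE
    simp only [LDE.vars, Finset.mem_union] at hx hy
    rcases hx with hx1 | hx2 <;> rcases hy with hy1 | hy2
    · -- both in E₁
      obtain ⟨px, hpx⟩ := E₁.posOf_eq_some hx1
      obtain ⟨py, hpy⟩ := E₁.posOf_eq_some hy1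
      have hxn : x ∉ E₂.vars := Finset.disjoint_left.1 hd hx1
      have hne : ¬ E₂.nestLe x y := fun h => hxn (E₂.nestLe_mem h).1
      have key := ih₁ h1 hx1 hy1
      rw [hpx, hpy] at key
      simp only [LDE.nestLe, LDE.posOf, hpx, hpy, hne, or_false]
      rw [key]
    · -- x in E₁, y in E₂
      have hyn : y ∉ E₁.vars := fun h => (Finset.disjoint_left.1 hd h) hy2
      have hxn : x ∉ E₂.vars := Finset.disjoint_left.1 hd hx1
      have hne1 : ¬ E₁.nestLe x y := fun h => hyn (E₁.nestLe_mem h).2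
      have hne2 : ¬ E₂.nestLe x y := fun h => hxn (E₂.nestLe_mem h).1
      obtain ⟨px, hpx⟩ := E₁.posOf_eq_some hx1
      obtain ⟨py, hpy⟩ := E₂.posOf_eq_some hy2
      obtain ⟨i, p', rfl, hi⟩ := E₁.posOf_cons hpx
      obtain ⟨j, q', rfl, hj⟩ := E₂.posOf_cons hpy
      have hyn' : E₁.posOf y = none := E₁.posOf_eq_none hyn
      simp only [LDE.nestLe, hne1, hne2, or_false, false_iff, LDE.posOf, hpx, hpy, hyn',
        Option.map_some]
      rintro ⟨px', py', hpx', hpy', hpre⟩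
      rw [Option.some_inj] at hpx' hpy'
      subst hpx'; subst hpy'
      rw [List.cons_prefix_cons] at hpre
      omega
    · -- x in E₂, y in E₁
      have hyn : y ∉ E₂.vars := Finset.disjoint_left.1 hd hy1
      have hxn : x ∉ E₁.vars := fun h => (Finset.disjoint_left.1 hd h) hx2
      have hne1 : ¬ E₁.nestLe x y := fun h => hxn (E₁.nestLe_mem h).1
      have hne2 : ¬ E₂.nestLe x y := fun h => hyn (E₂.nestLe_mem h).2
      obtain ⟨px, hpx⟩ := E₂.posOf_eq_some hx2
      obtain ⟨py, hpy⟩ := E₁.posOf_eq_some hy1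
      obtain ⟨i, p', rfl, hi⟩ := E₂.posOf_cons hpx
      obtain ⟨j, q', rfl, hj⟩ := E₁.posOf_cons hpy
      have hxn' : E₁.posOf x = none := E₁.posOf_eq_none hxn
      simp only [LDE.nestLe, hne1, hne2, or_false, false_iff, LDE.posOf, hpx, hpy, hxn',
        Option.map_some]
      rintro ⟨px', py', hpx', hpy', hpre⟩
      rw [Option.some_inj] at hpx' hpy'
      subst hpx'; subst hpy'
      rw [List.cons_prefix_cons] at hpre
      omega
    · -- both in E₂
      have hxn : x ∉ E₁.vars := fun h => (Finset.disjoint_left.1 hd h) hx2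
      have hyn : y ∉ E₁.vars := fun h => (Finset.disjoint_left.1 hd h) hy2
      have hne : ¬ E₁.nestLe x y := fun h => hxn (E₁.nestLe_mem h).1
      obtain ⟨px, hpx⟩ := E₂.posOf_eq_some hx2
      obtain ⟨py, hpy⟩ := E₂.posOf_eq_some hy2
      obtain ⟨i, p', rfl, hi⟩ := E₂.posOf_cons hpx
      obtain ⟨j, q', rfl, hj⟩ := E₂.posOf_cons hpy
      have hxn' : E₁.posOf x = none := E₁.posOf_eq_none hxn
      have hyn' : E₁.posOf y = none := E₁.posOf_eq_none hyn
      have key := ih₂ h2 hx2 hy2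
      rw [hpx, hpy] at key
      simp only [LDE.nestLe, hne, false_or, LDE.posOf, hpx, hpy, hxn', hyn',
        Option.map_some]
      rw [key]
      constructor
      · rintro ⟨px', py', hpx', hpy', hpre⟩
        rw [Option.some_inj] at hpx' hpy'
        subst hpx'; subst hpy'
        rw [List.cons_prefix_cons] at hpre
        exact ⟨_, _, rfl, rfl, List.cons_prefix_cons.2 ⟨by omega, hpre.2⟩⟩
      · rintro ⟨px', py', hpx', hpy', hpre⟩
        rw [Option.some_inj] at hpx' hpy'
        subst hpx'; subst hpy'
        rw [List.cons_prefix_cons] at hpre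
        exact ⟨_, _, rfl, rfl, List.cons_prefix_cons.2 ⟨by omega, hpre.2⟩⟩
  | step E v c ih =>
    obtain ⟨hWF, hv, hc⟩ := hE
    simp only [LDE.vars, Finset.mem_insert] at hx hy
    by_cases hyv : y = v
    · subst hyv
      simp only [LDE.nestLe, if_pos rfl, LDE.posOf, if_pos rfl]
      constructor
      · intro _
        by_cases hxy : x = y
        · exact ⟨[0], [0], by simp [hxy], rfl, List.prefix_refl _⟩
        · have hx' : x ∈ E.vars := hx.resolve_left hxy
          obtain ⟨p, hp⟩ := E.posOf_eq_some hx'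
          refine ⟨0 :: p, [0], ?_, rfl, ?_⟩
          · simp [hxy, hp]
          · exact ⟨p, rfl⟩
      · intro _
        exact hx
    · have hy' : y ∈ E.vars := hy.resolve_left hyv
      obtain ⟨q, hq⟩ := E.posOf_eq_some hy'
      simp only [LDE.nestLe, if_neg hyv, LDE.posOf, if_neg hyv, hq, Option.map_some]
      by_cases hxv : x = v
      · have hne : ¬ E.nestLe x y := fun h => hv (hxv ▸ (E.nestLe_mem h).1)
        obtain ⟨j, q', rfl, hj⟩ := E.posOf_cons hq
        simp only [hne, false_iff, if_pos hxv]
        rintro ⟨px', py', hpx', hpy', hpre⟩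
        rw [Option.some_inj] at hpx' hpy'
        subst hpx'; subst hpy'
        rw [List.cons_prefix_cons] at hpre
        simp at hpre
      · have hx' : x ∈ E.vars := hx.resolve_left hxv
        obtain ⟨p, hp⟩ := E.posOf_eq_some hx'
        have key := ih hWF hx' hy'
        rw [hp, hq] at key
        simp only [if_neg hxv, hp, Option.map_some]
        rw [key]
        constructor
        · rintro ⟨px', py', hpx', hpy', hpre⟩
          rw [Option.some_inj] at hpx' hpy'
          subst hpx'; subst hpy'
          exact ⟨_, _, rfl, rfl, List.cons_prefix_cons.2 ⟨rfl, hpre⟩⟩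
        · rintro ⟨px', py', hpx', hpy', hpre⟩
          rw [Option.some_inj] at hpx' hpy'
          subst hpx'; subst hpy'
          rw [List.cons_prefix_cons] at hpre
          exact ⟨_, _, rfl, rfl, hpre.2⟩
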